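/- Let Q and P be finite posets and let I ⊆ k[x_{Q×P}] be the ideal generated by a subset of the monomials m_{Γφ}, φ ∈ Hom(Q,P). Then I is unseparable: there is no surjection π : R′ → Q×P from a set R′ of cardinality |Q×P| + 1 (with a ≠ b the two elements of R′ having the same image (q,p), π injective elsewhere) together with a monomial ideal J ⊆ k[x_{R′}] such that (i) the ring map k[x_{R′}] → k[x_{Q×P}] induced by π maps J onto I, (ii) x_a divides some minimal monomial generator of J and likewise x_b, and (iii) x_a − x_b is a regular element (nonzerodivisor) on k[x_{R′}]/J. -/

import Mathlib

open MvPolynomial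

section Aux

open Finsupp

lemma aux_monomial_mem_of_le {k : Type*} [CommSemiring k] {σ : Type*}
    (K : Ideal (MvPolynomial σ k)) {s m : σ →₀ ℕ} (h : s ≤ m)
    (hs : monomial s (1 : k) ∈ K) : monomial m (1 : k) ∈ K := by
  obtain ⟨c, rfl⟩ := le_iff_exists_add.mp h
  have : monomial (s + c) (1 : k) = monomial s 1 * monomial c 1 := by
    rw [monomial_mul, one_mul]
  rw [this]
  exact Ideal.mul_mem_right _ _ hs

lemma aux_prod_X {k : Type*} [CommSemiring k] {Q σ : Type*} (s : Finset Q) (f : Q → σ) :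
    (∏ q ∈ s, (X (f q) : MvPolynomial σ k)) =
      monomial (∑ q ∈ s, Finsupp.single (f q) 1) 1 := by
  classical
  induction s using Finset.induction_on with
  | empty => simp
  | insert _ _ hq ih =>
      rw [Finset.prod_insert hq, Finset.sum_insert hq, ih]
      rw [X, monomial_mul, one_mul]

lemma aux_gamma_apply {Q P : Type*} [Fintype Q] [DecidableEq Q] [DecidableEq P]
    (φ : Q → P) (q : Q) (p : P) :
    (∑ q' : Q, Finsupp.single (q', φ q') (1 : ℕ)) (q, p) = if φ q = p then 1 else 0 := by
  classical
  rw [Finsupp.finset_sum_apply]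
  rw [Finset.sum_eq_single q]
  · rw [Finsupp.single_apply]
    by_cases h : φ q = p
    · simp [h]
    · simp [h, fun hh : (q, φ q) = (q, p) => h (congrArg Prod.snd hh)]
  · intro q' _ hne
    rw [Finsupp.single_apply, if_neg]
    intro hh
    exact hne (congrArg Prod.fst hh)
  · intro h
    exact absurd (Finset.mem_univ q) h

lemma aux_mapDomain_eq_sum {α β : Type*} [DecidableEq β] (f : α → β) (u : α →₀ ℕ) (y : β) :
    Finsupp.mapDomain f u y = ∑ x ∈ u.support, if f x = y then u x else 0 := by
  classical
  rw [Finsupp.mapDomain, Finsupp.sum_apply, Finsupp.sum]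
  exact Finset.sum_congr rfl fun x _ => Finsupp.single_apply

lemma aux_map_zero {α β : Type*} (f : α → β) (u : α →₀ ℕ) (y : β)
    (h : ∀ x, f x = y → u x = 0) : Finsupp.mapDomain f u y = 0 := by
  classical
  rw [aux_mapDomain_eq_sum]
  refine Finset.sum_eq_zero fun x _ => ?_
  by_cases hx : f x = y
  · rw [if_pos hx]; exact h x hx
  · rw [if_neg hx]

lemma aux_map_single_fiber {α β : Type*} (f : α → β) (u : α →₀ ℕ) (r : α)
    (hr : ∀ x, f x = f r → x = r) : Finsupp.mapDomain f u (f r) = u r := by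
  classical
  rw [aux_mapDomain_eq_sum]
  rw [show (∑ x ∈ u.support, if f x = f r then u x else 0)
      = ∑ x ∈ u.support, if x = r then u x else 0 from
    Finset.sum_congr rfl fun x _ => by
      by_cases hx : f x = f r
      · rw [if_pos hx, if_pos (hr x hx), hr x hx]
      · rw [if_neg hx, if_neg (fun h : x = r => hx (by rw [h]))]]
  rw [Finset.sum_ite_eq' u.support r u]
  by_cases h : r ∈ u.support
  · rw [if_pos h]
  · rw [if_neg h]
    exact (Finsupp.notMem_support_iff.mp h).symm

lemma aux_map_double_fiber {α β : Type*} (f : α → β) (u : α →₀ ℕ) (a b : α)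
    (hab : a ≠ b) (hfab : f a = f b)
    (hfib : ∀ x, f x = f a → x = a ∨ x = b) :
    Finsupp.mapDomain f u (f a) = u a + u b := by
  classical
  rw [aux_mapDomain_eq_sum]
  rw [show (∑ x ∈ u.support, if f x = f a then u x else 0)
      = ∑ x ∈ u.support, ((if x = a then u x else 0) + (if x = b then u x else 0)) from
    Finset.sum_congr rfl fun x _ => by
      by_cases hx : f x = f a
      · rcases hfib x hx with h | h
        · rw [if_pos hx, if_pos h, if_neg (h ▸ hab), add_zero]
        · rw [if_pos hx, if_neg (fun hh : x = a => hab (by rw [← hh, h])), if_pos h, zero_add]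
      · have hxa : x ≠ a := fun h => hx (by rw [h])
        have hxb : x ≠ b := fun h => hx (by rw [h, ← hfab])
        rw [if_neg hx, if_neg hxa, if_neg hxb, add_zero]]
  rw [Finset.sum_add_distrib, Finset.sum_ite_eq' u.support a u, Finset.sum_ite_eq' u.support b u]
  have ha : (if a ∈ u.support then u a else 0) = u a := by
    by_cases h : a ∈ u.support
    · rw [if_pos h]
    · rw [if_neg h]; exact (Finsupp.notMem_support_iff.mp h).symm
  have hb : (if b ∈ u.support then u b else 0) = u b := by
    by_cases h : b ∈ u.support
    · rw [if_pos h]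
    · rw [if_neg h]; exact (Finsupp.notMem_support_iff.mp h).symm
  rw [ha, hb]

lemma aux_map_congr {α β : Type*} (f : α → β) (u w : α →₀ ℕ) (y : β)
    (h : ∀ x, f x = y → u x = w x) :
    Finsupp.mapDomain f u y = Finsupp.mapDomain f w y := by
  classical
  rw [aux_mapDomain_eq_sum, aux_mapDomain_eq_sum]
  have e1 : (∑ x ∈ u.support, if f x = y then u x else 0)
      = ∑ x ∈ u.support ∪ w.support, if f x = y then u x else 0 :=
    Finset.sum_subset Finset.subset_union_left (fun x _ hx => by
      rw [Finsupp.notMem_support_iff.mp hx]; simp)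
  have e2 : (∑ x ∈ w.support, if f x = y then w x else 0)
      = ∑ x ∈ u.support ∪ w.support, if f x = y then w x else 0 :=
    Finset.sum_subset Finset.subset_union_right (fun x _ hx => by
      rw [Finsupp.notMem_support_iff.mp hx]; simp)
  rw [e1, e2]
  refine Finset.sum_congr rfl fun x _ => ?_
  by_cases hx : f x = y
  · rw [if_pos hx, if_pos hx, h x hx]
  · rw [if_neg hx, if_neg hx]

lemma aux_memJ {k : Type*} [Field k] {σ : Type*} (J : Ideal (MvPolynomial σ k))
    (D : Set (σ →₀ ℕ)) (hD : J = Ideal.span ((fun d => monomial d (1 : k)) '' D))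
    (m : σ →₀ ℕ) : monomial m (1 : k) ∈ J ↔ ∃ s ∈ D, s ≤ m := by
  classical
  constructor
  · intro h
    rw [hD] at h
    have := mem_ideal_span_monomial_image.mp h m
    apply this
    rw [support_monomial, if_neg one_ne_zero]
    exact Finset.mem_singleton_self m
  · rintro ⟨s, hsD, hsm⟩
    refine aux_monomial_mem_of_le J hsm ?_
    rw [hD]
    exact Ideal.subset_span ⟨s, hsD, rfl⟩

lemma aux_hIspan {k : Type*} [Field k] {Q P : Type*} [Fintype Q]
    (G : Set (Q → P)) (I : Ideal (MvPolynomial (Q × P) k))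
    (hI : I = Ideal.span ((fun φ : Q → P => ∏ q : Q, X (q, φ q)) '' G)) :
    I = Ideal.span ((fun s => monomial s (1 : k)) ''
      ((fun φ : Q → P => ∑ q : Q, Finsupp.single (q, φ q) 1) '' G)) := by
  rw [hI, Set.image_image]
  congr 1
  ext f
  constructor
  · rintro ⟨φ, hφ, rfl⟩; exact ⟨φ, hφ, (aux_prod_X Finset.univ _).symm⟩
  · rintro ⟨φ, hφ, rfl⟩; exact ⟨φ, hφ, aux_prod_X Finset.univ _⟩

lemma aux_toI {k : Type*} [Field k] {Q P R' : Type*} [Fintype Q]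
    (G : Set (Q → P)) (I : Ideal (MvPolynomial (Q × P) k))
    (hI : I = Ideal.span ((fun φ : Q → P => ∏ q : Q, X (q, φ q)) '' G))
    (π : R' → Q × P) (J : Ideal (MvPolynomial R' k))
    (hmap : Ideal.map (rename π) J = I)
    (m : R' →₀ ℕ) (hm : monomial m (1 : k) ∈ J) :
    ∃ φ ∈ G, (∑ q : Q, Finsupp.single (q, φ q) 1) ≤ Finsupp.mapDomain π m := by
  classical
  have h1 : monomial (Finsupp.mapDomain π m) (1 : k) ∈ I := by
    rw [← hmap, ← rename_monomial]
    exact Ideal.mem_map_of_mem _ hm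
  rw [aux_hIspan G I hI] at h1
  have := mem_ideal_span_monomial_image.mp h1 (Finsupp.mapDomain π m)
    (by rw [support_monomial, if_neg one_ne_zero]; exact Finset.mem_singleton_self _)
  obtain ⟨si, ⟨φ, hφ, rfl⟩, hle⟩ := this
  exact ⟨φ, hφ, hle⟩

lemma aux_fromI {k : Type*} [Field k] {Q P R' : Type*}
    (I : Ideal (MvPolynomial (Q × P) k))
    (π : R' → Q × P) (J : Ideal (MvPolynomial R' k))
    (D : Set (R' →₀ ℕ)) (hD : J = Ideal.span ((fun d => monomial d (1 : k)) '' D))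
    (hmap : Ideal.map (rename π) J = I)
    (m' : (Q × P) →₀ ℕ) (hm : monomial m' (1 : k) ∈ I) :
    ∃ s ∈ D, Finsupp.mapDomain π s ≤ m' := by
  classical
  have hIdesc : I = Ideal.span ((fun s => monomial s (1 : k)) ''
      (Finsupp.mapDomain π '' D)) := by
    rw [← hmap, hD, Ideal.map_span, Set.image_image, Set.image_image]
    congr 1
    ext f
    constructor
    · rintro ⟨d, hd, rfl⟩; exact ⟨d, hd, (rename_monomial _ _ _).symm⟩
    · rintro ⟨d, hd, rfl⟩; exact ⟨d, hd, rename_monomial _ _ _⟩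
  rw [hIdesc] at hm
  have := mem_ideal_span_monomial_image.mp hm m'
    (by rw [support_monomial, if_neg one_ne_zero]; exact Finset.mem_singleton_self _)
  obtain ⟨si, ⟨d, hd, rfl⟩, hle⟩ := this
  exact ⟨d, hd, hle⟩

end Aux

lemma aux_key {k : Type*} [Field k] {Q P R' : Type*} [Fintype Q]
    (G : Set (Q → P)) (I : Ideal (MvPolynomial (Q × P) k))
    (hI : I = Ideal.span ((fun φ : Q → P => ∏ q : Q, X (q, φ q)) '' G))
    (π : R' → Q × P) (a b : R') (hab : a ≠ b) (hπab : π a = π b)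
    (hπinj : ∀ x y : R', x ≠ y → π x = π y → ({x, y} : Set R') = {a, b})
    (J : Ideal (MvPolynomial R' k)) (D : Set (R' →₀ ℕ))
    (hD : J = Ideal.span ((fun d => monomial d (1 : k)) '' D))
    (hmap : Ideal.map (rename π) J = I)
    (hreg : ∀ f : MvPolynomial R' k, (X a - X b) * f ∈ J → f ∈ J)
    (d : R' →₀ ℕ) (hdJ : monomial d (1 : k) ∈ J) (hda : 0 < d a)
    (hdmin : ∀ d' ≤ d, monomial d' (1 : k) ∈ J → d' = d) :
    d a = 1 ∧ d b = 0 ∧ ∀ r, r ≠ a → r ≠ b → (π r).1 = (π a).1 → d r = 0 := by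
  classical
  -- fiber structure
  have h2 : ∀ x, π x = π a → x = a ∨ x = b := by
    intro x hx
    by_cases hxa : x = a
    · exact Or.inl hxa
    · have hs := hπinj x a hxa hx
      have hxmem : x ∈ ({a, b} : Set R') := by
        rw [← hs]; exact Set.mem_insert x {a}
      simpa using hxmem
  have h1 : ∀ r, r ≠ a → r ≠ b → ∀ x, π x = π r → x = r := by
    intro r hra hrb x hx
    by_contra hxr
    have hs := hπinj x r hxr hx
    have hrmem : r ∈ ({a, b} : Set R') := by
      rw [← hs]; exact Set.mem_insert_of_mem x rfl
    rcases hrmem with h | h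
    · exact hra h
    · exact hrb h
  -- multiplication by variables
  have hXmul : ∀ (c : R') (t : R' →₀ ℕ),
      (X c : MvPolynomial R' k) * monomial t 1 = monomial (t + Finsupp.single c 1) 1 := by
    intro c t
    rw [X, monomial_mul, one_mul, add_comm]
  have hswap : ∀ v : R' →₀ ℕ, monomial (v + Finsupp.single a 1) (1 : k) ∈ J →
      monomial (v + Finsupp.single b 1) (1 : k) ∈ J → monomial v (1 : k) ∈ J := by
    intro v hva hvb
    apply hreg
    rw [sub_mul, hXmul, hXmul]
    exact sub_mem hva hvb
  -- Γφ bound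
  have hΓle1 : ∀ (φ : Q → P) (y : Q × P),
      (∑ q : Q, Finsupp.single (q, φ q) (1 : ℕ)) y ≤ 1 := by
    rintro φ ⟨q, p⟩
    rw [aux_gamma_apply]
    split <;> omega
  -- membership transfer
  have hmemI : ∀ (u : R' →₀ ℕ) (φ : Q → P), φ ∈ G →
      (∑ q : Q, Finsupp.single (q, φ q) 1) ≤ Finsupp.mapDomain π u →
      ∃ s ∈ D, Finsupp.mapDomain π s ≤ Finsupp.mapDomain π u := by
    intro u φ hφ hle
    apply aux_fromI I π J D hD hmap
    apply aux_monomial_mem_of_le I hle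
    rw [aux_hIspan G I hI]
    exact Ideal.subset_span ⟨_, ⟨φ, hφ, rfl⟩, rfl⟩
  have hL2 : ∀ s u : R' →₀ ℕ, Finsupp.mapDomain π s ≤ Finsupp.mapDomain π u →
      (∀ r, r ≠ a → r ≠ b → s r ≤ u r) ∧ s a + s b ≤ u a + u b := by
    intro s u h
    constructor
    · intro r hra hrb
      have hh := Finsupp.le_def.mp h (π r)
      rwa [aux_map_single_fiber π s r (h1 r hra hrb),
        aux_map_single_fiber π u r (h1 r hra hrb)] at hh
    · have hh := Finsupp.le_def.mp h (π a)
      rwa [aux_map_double_fiber π s a b hab hπab h2,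
        aux_map_double_fiber π u a b hab hπab h2] at hh
  -- key dichotomy
  have hlemB : ∀ u : R' →₀ ℕ, u a = 1 → u b = 0 →
      (∃ φ ∈ G, (∑ q : Q, Finsupp.single (q, φ q) 1) ≤ Finsupp.mapDomain π u) →
      monomial u (1 : k) ∈ J ∨
        monomial (u.erase a + Finsupp.single b 1) (1 : k) ∈ J := by
    rintro u hua hub ⟨φ, hφ, hle⟩
    obtain ⟨s, hsD, hsle⟩ := hmemI u φ hφ hle
    obtain ⟨hoff, hsum⟩ := hL2 s u hsle
    rw [hua, hub] at hsum
    by_cases hsb : s b = 0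
    · left
      rw [aux_memJ J D hD]
      refine ⟨s, hsD, Finsupp.le_def.mpr fun r => ?_⟩
      by_cases hra : r = a
      · rw [hra, hua]; omega
      · by_cases hrb : r = b
        · rw [hrb, hub, hsb]
        · exact hoff r hra hrb
    · right
      rw [aux_memJ J D hD]
      refine ⟨s, hsD, Finsupp.le_def.mpr fun r => ?_⟩
      by_cases hra : r = a
      · have hsa : s a = 0 := by omega
        rw [hra, hsa]; exact Nat.zero_le _
      · by_cases hrb : r = b
        · have hsb1 : s b = 1 := by omega
          rw [hrb, hsb1, Finsupp.add_apply, Finsupp.erase_ne (Ne.symm hab), hub,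
            Finsupp.single_apply, if_pos rfl]
        · have hval : (u.erase a + Finsupp.single b 1 : R' →₀ ℕ) r = u r := by
            rw [Finsupp.add_apply, Finsupp.erase_ne hra, Finsupp.single_apply,
              if_neg (Ne.symm hrb), add_zero]
          rw [hval]; exact hoff r hra hrb
  -- the truncation v of d
  set v : R' →₀ ℕ := (d.erase a).erase b with hv
  have hva : v a = 0 := by
    rw [hv, Finsupp.erase_ne hab, Finsupp.erase_same]
  have hvb : v b = 0 := by rw [hv, Finsupp.erase_same]
  have hvr : ∀ r, r ≠ a → r ≠ b → v r = d r := by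
    intro r hra hrb
    rw [hv, Finsupp.erase_ne hrb, Finsupp.erase_ne hra]
  obtain ⟨φa, hφaG, hφad⟩ := aux_toI G I hI π J hmap d hdJ
  -- congr lemma: off {a,b}-agreement
  have hmapcong : ∀ u : R' →₀ ℕ, (∀ r, r ≠ a → r ≠ b → u r = d r) →
      ∀ y, y ≠ π a → Finsupp.mapDomain π u y = Finsupp.mapDomain π d y := by
    intro u hu y hy
    refine aux_map_congr π u d y fun x hx => ?_
    have hxa : x ≠ a := fun h => hy (by rw [← hx, h])
    have hxb : x ≠ b := fun h => hy (by rw [← hx, h, ← hπab])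
    exact hu x hxa hxb
  -- Sub-claim 1 : d a = 1 ∧ d b = 0
  have hu₁a : (v + Finsupp.single a 1 : R' →₀ ℕ) a = 1 := by
    rw [Finsupp.add_apply, hva, Finsupp.single_apply, if_pos rfl]
  have hu₁b : (v + Finsupp.single a 1 : R' →₀ ℕ) b = 0 := by
    rw [Finsupp.add_apply, hvb, Finsupp.single_apply, if_neg hab]
    omega
  have hu₁off : ∀ r, r ≠ a → r ≠ b → (v + Finsupp.single a 1 : R' →₀ ℕ) r = d r := by
    intro r hra hrb
    rw [Finsupp.add_apply, hvr r hra hrb, Finsupp.single_apply,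
      if_neg (Ne.symm hra), add_zero]
  have hΓu₁ : (∑ q : Q, Finsupp.single (q, φa q) 1)
      ≤ Finsupp.mapDomain π (v + Finsupp.single a 1) := by
    rw [Finsupp.le_def]
    intro y
    by_cases hy : y = π a
    · rw [hy, aux_map_double_fiber π _ a b hab hπab h2, hu₁a, hu₁b]
      exact hΓle1 φa (π a)
    · rw [hmapcong _ hu₁off y hy]
      exact Finsupp.le_def.mp hφad y
  have hu₁led : v + Finsupp.single a 1 ≤ d := by
    rw [Finsupp.le_def]; intro r
    by_cases hra : r = a
    · rw [hra, hu₁a]; omega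
    · by_cases hrb : r = b
      · rw [hrb, hu₁b]; omega
      · rw [hu₁off r hra hrb]
  have herase : (v + Finsupp.single a 1).erase a = v := by
    ext r
    by_cases hr : r = a
    · rw [hr, Finsupp.erase_same, hva]
    · rw [Finsupp.erase_ne hr, Finsupp.add_apply, Finsupp.single_apply,
        if_neg (Ne.symm hr), add_zero]
  have hsc1 : d a = 1 ∧ d b = 0 := by
    rcases hlemB (v + Finsupp.single a 1) hu₁a hu₁b ⟨φa, hφaG, hΓu₁⟩ with hc1 | hc2
    · have heq := hdmin (v + Finsupp.single a 1) hu₁led hc1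
      constructor
      · rw [← heq, hu₁a]
      · rw [← heq, hu₁b]
    · rw [herase] at hc2
      -- hc2 : monomial (v + single b 1) ∈ J
      have hdb : d b = 0 := by
        by_contra hdb
        have hwled : v + Finsupp.single b 1 ≤ d := by
          rw [Finsupp.le_def]; intro r
          by_cases hra : r = a
          · rw [hra, Finsupp.add_apply, hva, Finsupp.single_apply, if_neg (Ne.symm hab)]
            omega
          · by_cases hrb : r = b
            · rw [hrb, Finsupp.add_apply, hvb, Finsupp.single_apply, if_pos rfl]
              omega
            · rw [Finsupp.add_apply, hvr r hra hrb, Finsupp.single_apply,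
                if_neg (Ne.symm hrb), add_zero]
        have heq := hdmin (v + Finsupp.single b 1) hwled hc2
        have : (v + Finsupp.single b 1 : R' →₀ ℕ) a = d a := by rw [heq]
        rw [Finsupp.add_apply, hva, Finsupp.single_apply, if_neg (Ne.symm hab)] at this
        omega
      refine ⟨?_, hdb⟩
      by_contra hda1
      have hα : 2 ≤ d a := by omega
      exfalso
      set α := d a with hα'
      have hd_eq : d = v + Finsupp.single a α := by
        ext r
        by_cases hra : r = a
        · rw [hra, Finsupp.add_apply, hva, Finsupp.single_apply, if_pos rfl, zero_add]
        · by_cases hrb : r = b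
          · rw [hrb, Finsupp.add_apply, hvb, Finsupp.single_apply, if_neg hab, hdb]
            omega
          · rw [Finsupp.add_apply, hvr r hra hrb, Finsupp.single_apply,
              if_neg (Ne.symm hra), add_zero]
      set u : ℕ → MvPolynomial R' k :=
        fun l => monomial (v + Finsupp.single a l + Finsupp.single b (α - l)) 1 with hu
      set f : MvPolynomial R' k := ∑ l ∈ Finset.range α,
        monomial (v + Finsupp.single a l + Finsupp.single b (α - 1 - l)) 1 with hf
      have htel : (X a - X b) * f = u α - u 0 := by
        rw [hf, sub_mul, Finset.mul_sum, Finset.mul_sum, ← Finset.sum_sub_distrib]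
        rw [show (∑ l ∈ Finset.range α,
            ((X a : MvPolynomial R' k) *
                monomial (v + Finsupp.single a l + Finsupp.single b (α - 1 - l)) 1 -
              X b * monomial (v + Finsupp.single a l + Finsupp.single b (α - 1 - l)) 1))
            = ∑ l ∈ Finset.range α, (u (l + 1) - u l) from
          Finset.sum_congr rfl fun l hl => by
            have hl' : l < α := Finset.mem_range.mp hl
            rw [hXmul, hXmul, hu]
            have e1 : v + Finsupp.single a l + Finsupp.single b (α - 1 - l) +
                Finsupp.single a 1
                = v + Finsupp.single a (l + 1) + Finsupp.single b (α - (l + 1)) := by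
              ext r
              simp only [Finsupp.add_apply, Finsupp.single_apply]
              split_ifs <;> omega
            have e2 : v + Finsupp.single a l + Finsupp.single b (α - 1 - l) +
                Finsupp.single b 1
                = v + Finsupp.single a l + Finsupp.single b (α - l) := by
              ext r
              simp only [Finsupp.add_apply, Finsupp.single_apply]
              split_ifs <;> omega
            rw [e1, e2]]
        exact Finset.sum_range_sub u α
      have hXainJ : u α ∈ J := by
        rw [hu]
        simp only []
        have hexp : v + Finsupp.single a α + Finsupp.single b (α - α) = d := by
          rw [Nat.sub_self, Finsupp.single_zero, add_zero, ← hd_eq]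
        rw [hexp]
        exact hdJ
      have hXbinJ : u 0 ∈ J := by
        rw [hu]
        refine aux_monomial_mem_of_le J (Finsupp.le_def.mpr fun r => ?_) hc2
        simp only [Finsupp.add_apply, Finsupp.single_apply]
        split_ifs <;> omega
      have hfJ : f ∈ J := hreg f (by rw [htel]; exact sub_mem hXainJ hXbinJ)
      set mstar : R' →₀ ℕ := v + Finsupp.single a (α - 1) with hmstar
      have hcoeff : coeff mstar f = 1 := by
        rw [hf, coeff_sum]
        rw [show (∑ l ∈ Finset.range α,
            coeff mstar (monomial (v + Finsupp.single a l + Finsupp.single b (α - 1 - l)) (1 : k)))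
            = ∑ l ∈ Finset.range α, if l = α - 1 then (1 : k) else 0 from
          Finset.sum_congr rfl fun l hl => by
            have hl' : l < α := Finset.mem_range.mp hl
            by_cases hcond : l = α - 1
            · rw [if_pos hcond, coeff_monomial, if_pos]
              ext r
              rw [hmstar]
              simp only [Finsupp.add_apply, Finsupp.single_apply]
              split_ifs <;> omega
            · rw [if_neg hcond, coeff_monomial, if_neg]
              intro hcontra
              apply hcond
              have hLa : (v + Finsupp.single a l + Finsupp.single b (α - 1 - l) :
                  R' →₀ ℕ) a = l := by
                rw [Finsupp.add_apply, Finsupp.add_apply, hva, Finsupp.single_apply,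
                  if_pos rfl, Finsupp.single_apply, if_neg (Ne.symm hab)]
                omega
              have hRa : mstar a = α - 1 := by
                rw [hmstar, Finsupp.add_apply, hva, Finsupp.single_apply, if_pos rfl,
                  zero_add]
              have h : (v + Finsupp.single a l + Finsupp.single b (α - 1 - l) :
                  R' →₀ ℕ) a = mstar a := by rw [hcontra]
              rw [hLa, hRa] at h
              exact h]
        rw [Finset.sum_ite_eq' (Finset.range α) (α - 1) (fun _ => (1 : k)),
          if_pos (Finset.mem_range.mpr (by omega))]
      have hmem : mstar ∈ f.support := by
        rw [mem_support_iff, hcoeff]; exact one_ne_zero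
      have hex : ∃ s ∈ D, s ≤ mstar := by
        have hfJ' := hfJ
        rw [hD] at hfJ'
        exact mem_ideal_span_monomial_image.mp hfJ' mstar hmem
      have hmstarJ : monomial mstar (1 : k) ∈ J := (aux_memJ J D hD mstar).mpr hex
      have hmled : mstar ≤ d := by
        rw [Finsupp.le_def]; intro r
        rw [hmstar, hd_eq]
        simp only [Finsupp.add_apply, Finsupp.single_apply]
        split_ifs <;> omega
      have heq := hdmin mstar hmled hmstarJ
      have hma : mstar a = α - 1 := by
        rw [hmstar, Finsupp.add_apply, hva, Finsupp.single_apply, if_pos rfl, zero_add]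
      have hfin : mstar a = d a := by rw [heq]
      rw [hma] at hfin
      omega
  obtain ⟨hda1, hdb0⟩ := hsc1
  -- d = v + single a 1
  have hd_eq1 : d = v + Finsupp.single a 1 := by
    ext r
    by_cases hra : r = a
    · rw [hra, Finsupp.add_apply, hva, Finsupp.single_apply, if_pos rfl, zero_add, hda1]
    · by_cases hrb : r = b
      · rw [hrb, Finsupp.add_apply, hvb, Finsupp.single_apply, if_neg hab, hdb0]
        omega
      · rw [Finsupp.add_apply, hvr r hra hrb, Finsupp.single_apply,
          if_neg (Ne.symm hra), add_zero]
  have hvled : v ≤ d := by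
    rw [Finsupp.le_def]; intro r
    by_cases hra : r = a
    · rw [hra, hva]; omega
    · by_cases hrb : r = b
      · rw [hrb, hvb]; omega
      · rw [hvr r hra hrb]
  -- φa sends (π a).1 to (π a).2
  have hφac : φa (π a).1 = (π a).2 := by
    by_contra hne
    have hΓ0 : (∑ q : Q, Finsupp.single (q, φa q) (1 : ℕ)) (π a) = 0 := by
      conv_lhs => rw [← Prod.mk.eta (p := π a)]
      rw [aux_gamma_apply, if_neg hne]
    have hlev : (∑ q : Q, Finsupp.single (q, φa q) 1) ≤ Finsupp.mapDomain π v := by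
      rw [Finsupp.le_def]; intro y
      by_cases hy : y = π a
      · rw [hy, hΓ0]; exact Nat.zero_le _
      · rw [hmapcong v hvr y hy]
        exact Finsupp.le_def.mp hφad y
    obtain ⟨s, hsD, hsle⟩ := hmemI v φa hφaG hlev
    obtain ⟨hoff, hsum⟩ := hL2 s v hsle
    rw [hva, hvb] at hsum
    have hsv : s ≤ v := by
      rw [Finsupp.le_def]; intro r
      by_cases hra : r = a
      · rw [hra, hva]; omega
      · by_cases hrb : r = b
        · rw [hrb, hvb]; omega
        · exact hoff r hra hrb
    have hvJ : monomial v (1 : k) ∈ J := (aux_memJ J D hD v).mpr ⟨s, hsD, hsv⟩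
    have heq := hdmin v hvled hvJ
    rw [heq] at hva
    omega
  -- Sub-claim 2
  refine ⟨hda1, hdb0, fun r₂ hra hrb hq => ?_⟩
  by_contra hdr2
  have hdr2' : 0 < d r₂ := Nat.pos_of_ne_zero hdr2
  have hπr2 : π r₂ ≠ π a := by
    intro h
    rcases h2 r₂ h with h' | h'
    · exact hra h'
    · exact hrb h'
  have hΓr2 : (∑ q : Q, Finsupp.single (q, φa q) (1 : ℕ)) (π r₂) = 0 := by
    conv_lhs => rw [← Prod.mk.eta (p := π r₂)]
    rw [aux_gamma_apply, if_neg]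
    intro h
    apply hπr2
    have h22 : (π r₂).2 = (π a).2 := by rw [← h, hq, hφac]
    have := Prod.ext hq h22
    rw [← Prod.mk.eta (p := π r₂), ← Prod.mk.eta (p := π a)]
    rw [hq, h22]
  set w : R' →₀ ℕ := d.erase r₂ with hw
  have hwa : w a = 1 := by rw [hw, Finsupp.erase_ne (Ne.symm hra), hda1]
  have hwb : w b = 0 := by rw [hw, Finsupp.erase_ne (Ne.symm hrb), hdb0]
  have hΓw : (∑ q : Q, Finsupp.single (q, φa q) 1) ≤ Finsupp.mapDomain π w := by
    rw [Finsupp.le_def]; intro y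
    by_cases hy : y = π r₂
    · rw [hy, hΓr2]; exact Nat.zero_le _
    · have : Finsupp.mapDomain π w y = Finsupp.mapDomain π d y := by
        refine aux_map_congr π w d y fun x hx => ?_
        have hxr2 : x ≠ r₂ := fun h => hy (by rw [← hx, h])
        rw [hw, Finsupp.erase_ne hxr2]
      rw [this]
      exact Finsupp.le_def.mp hφad y
  rcases hlemB w hwa hwb ⟨φa, hφaG, hΓw⟩ with hc1 | hc2
  · have hwled : w ≤ d := by
      rw [Finsupp.le_def]; intro r
      by_cases hr : r = r₂
      · rw [hr, hw, Finsupp.erase_same]; omega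
      · rw [hw, Finsupp.erase_ne hr]
    have heq := hdmin w hwled hc1
    have := congrArg (fun t => t r₂) heq
    rw [hw] at this
    simp only [Finsupp.erase_same] at this
    exact hdr2 this.symm
  · -- hc2 : monomial (w.erase a + single b 1) ∈ J
    have hle0 : w.erase a ≤ v := by
      rw [Finsupp.le_def]; intro r
      by_cases hrae : r = a
      · rw [hrae, Finsupp.erase_same]; exact Nat.zero_le _
      · rw [Finsupp.erase_ne hrae]
        by_cases hr2 : r = r₂
        · rw [hr2, hw, Finsupp.erase_same]; exact Nat.zero_le _
        · rw [hw, Finsupp.erase_ne hr2]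
          by_cases hrbe : r = b
          · rw [hrbe, hdb0, hvb]
          · rw [hvr r hrae hrbe]
    have hle' : w.erase a + Finsupp.single b 1 ≤ v + Finsupp.single b 1 :=
      add_le_add_left hle0 _
    have hvb1J : monomial (v + Finsupp.single b 1) (1 : k) ∈ J :=
      aux_monomial_mem_of_le J hle' hc2
    have hva1J : monomial (v + Finsupp.single a 1) (1 : k) ∈ J := by
      rw [← hd_eq1]; exact hdJ
    have hvJ : monomial v (1 : k) ∈ J := hswap v hva1J hvb1J
    have heq := hdmin v hvled hvJ
    rw [heq] at hva
    omega

/-- An ideal generated by a subset of the generators `m_{Γφ}`, `φ ∈ Hom(Q,P)`,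
of `L(Q,P)` is unseparable: it admits no separation. -/
theorem subideal_of_letterplace_unseparable
    (k : Type*) [Field k]
    {Q P : Type*} [PartialOrder Q] [Fintype Q] [PartialOrder P] [Fintype P]
    (G : Set (Q → P)) (hG : ∀ φ ∈ G, Monotone φ)
    (I : Ideal (MvPolynomial (Q × P) k))
    (hI : I = Ideal.span ((fun φ : Q → P => ∏ q : Q, X (q, φ q)) '' G))
    {R' : Type*} [Fintype R']
    (π : R' → Q × P) (hπsurj : Function.Surjective π)
    (a b : R') (hab : a ≠ b) (hπab : π a = π b)
    (hcard : Fintype.card R' = Fintype.card (Q × P) + 1)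
    (hπinj : ∀ x y : R', x ≠ y → π x = π y → ({x, y} : Set R') = {a, b})
    (J : Ideal (MvPolynomial R' k))
    (hJmono : ∃ D : Set (R' →₀ ℕ),
      J = Ideal.span ((fun d => monomial d (1 : k)) '' D))
    (hmap : Ideal.map (rename π) J = I)
    (hgena : ∃ d : R' →₀ ℕ, monomial d (1 : k) ∈ J ∧ 0 < d a ∧
      ∀ d' ≤ d, monomial d' (1 : k) ∈ J → d' = d)
    (hgenb : ∃ d : R' →₀ ℕ, monomial d (1 : k) ∈ J ∧ 0 < d b ∧
      ∀ d' ≤ d, monomial d' (1 : k) ∈ J → d' = d)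
    (hreg : ∀ f : MvPolynomial R' k, (X a - X b) * f ∈ J → f ∈ J) :
    False := by
  classical
  obtain ⟨D, hD⟩ := hJmono
  obtain ⟨d, hdJ, hda, hdmin⟩ := hgena
  obtain ⟨e, heJ, heb, hemin⟩ := hgenb
  have hπinj' : ∀ x y : R', x ≠ y → π x = π y → ({x, y} : Set R') = {b, a} := by
    intro x y hxy h
    rw [hπinj x y hxy h, Set.pair_comm]
  have hreg' : ∀ f : MvPolynomial R' k, (X b - X a) * f ∈ J → f ∈ J := by
    intro f hf
    have h1 : (X a - X b) * (-f) ∈ J := by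
      rw [mul_neg, ← neg_mul, neg_sub]
      exact hf
    have h2 := hreg (-f) h1
    simpa using neg_mem h2
  obtain ⟨hda1, hdb0, hdrow⟩ :=
    aux_key G I hI π a b hab hπab hπinj J D hD hmap hreg d hdJ hda hdmin
  obtain ⟨heb1, hea0, herow⟩ :=
    aux_key G I hI π b a (Ne.symm hab) hπab.symm hπinj' J D hD hmap hreg' e heJ heb hemin
  set d' : R' →₀ ℕ := d.erase a with hd'
  set e' : R' →₀ ℕ := e.erase b with he'
  set g : R' →₀ ℕ := d' + (e' - d') with hg
  have hd'a : d' a = 0 := Finsupp.erase_same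
  have he'b : e' b = 0 := Finsupp.erase_same
  have hgapp : ∀ r, g r = d' r + (e' r - d' r) := by
    intro r; rw [hg, Finsupp.add_apply, Finsupp.tsub_apply]
  have hrow : ∀ x, (π x).1 = (π a).1 → g x = 0 := by
    intro x hx
    rw [hgapp]
    by_cases hxa : x = a
    · have h2 : e' a = 0 := by
        rw [he', Finsupp.erase_ne hab]
        exact hea0
      rw [hxa, hd'a, h2]
    · by_cases hxb : x = b
      · have h1 : d' b = 0 := by
          rw [hd', Finsupp.erase_ne (Ne.symm hab)]
          exact hdb0
        rw [hxb, h1, he'b]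
      · have h1 : d' x = 0 := by
          rw [hd', Finsupp.erase_ne hxa]
          exact hdrow x hxa hxb hx
        have h2 : e' x = 0 := by
          rw [he', Finsupp.erase_ne hxb]
          exact herow x hxb hxa (by rw [← hπab]; exact hx)
        rw [h1, h2]
  have hled : d ≤ g + Finsupp.single a 1 := by
    rw [Finsupp.le_def]; intro r
    rw [Finsupp.add_apply, hgapp r, Finsupp.single_apply]
    by_cases hra : a = r
    · have h1 : d' r = 0 := by rw [← hra]; exact hd'a
      have h2 : d r = 1 := by rw [← hra]; exact hda1
      rw [if_pos hra, h1, h2]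
      omega
    · have h1 : d' r = d r := by
        rw [hd']; exact Finsupp.erase_ne (fun h => hra h.symm)
      rw [if_neg hra, h1]
      omega
  have hlee : e ≤ g + Finsupp.single b 1 := by
    rw [Finsupp.le_def]; intro r
    rw [Finsupp.add_apply, hgapp r, Finsupp.single_apply]
    by_cases hrb : b = r
    · have h2 : e r = 1 := by rw [← hrb]; exact heb1
      rw [if_pos hrb, h2]
      omega
    · have h1 : e' r = e r := by
        rw [he']; exact Finsupp.erase_ne (fun h => hrb h.symm)
      rw [if_neg hrb, ← h1]
      omega
  have hmem1 : monomial (g + Finsupp.single a 1) (1 : k) ∈ J :=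
    aux_monomial_mem_of_le J hled hdJ
  have hmem2 : monomial (g + Finsupp.single b 1) (1 : k) ∈ J :=
    aux_monomial_mem_of_le J hlee heJ
  have hXmul : ∀ (c : R') (t : R' →₀ ℕ),
      (X c : MvPolynomial R' k) * monomial t 1 = monomial (t + Finsupp.single c 1) 1 := by
    intro c t; rw [X, monomial_mul, one_mul, add_comm]
  have hgJ : monomial g (1 : k) ∈ J := by
    apply hreg
    rw [sub_mul, hXmul, hXmul]
    exact sub_mem hmem1 hmem2
  obtain ⟨φ, hφG, hφle⟩ := aux_toI G I hI π J hmap g hgJ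
  have h1 := Finsupp.le_def.mp hφle ((π a).1, φ (π a).1)
  rw [aux_gamma_apply φ (π a).1 (φ (π a).1), if_pos rfl] at h1
  rw [aux_map_zero π g ((π a).1, φ (π a).1)
    (fun x hx => hrow x (by rw [hx]))] at h1
  omega
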